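/- Let p be a prime number, s a positive integer, and n a positive integer. If n = p^s·(3t^2 + t)/2 for some integer t, then τ_{p^s}(n+1) ≡ (-1)^t (mod p); otherwise τ_{p^s}(n+1) ≡ 0 (mod p). -/

import Mathlib

open PowerSeries Finset

/-- `1 - X^(m+1)` is a unit in `ℤ⟦X⟧`. -/
lemma isUnit_one_sub_X_pow (m : ℕ) :
    IsUnit ((1 : PowerSeries ℤ) - (PowerSeries.X : PowerSeries ℤ) ^ (m + 1)) := by
  rw [PowerSeries.isUnit_iff_constantCoeff]
  simp

/-- `tau k n` is the coefficient of `q^n` in `q·∏_{m=1}^∞ (1-q^m)^k` (`k : ℤ`).  Since each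
factor `(1-q^m)^(±|k|)` is `1 + (terms of degree ≥ m)`, the coefficient of `q^(n-1)` in the
infinite product agrees with that of the finite product `∏_{m=1}^{n} (1-q^m)^k`, computed in
the unit group of `ℤ⟦X⟧` (so that negative exponents make sense). -/
noncomputable def tau (k : ℤ) (n : ℕ) : ℤ :=
  PowerSeries.coeff (n - 1)
    ((↑(∏ m ∈ Finset.range n, (isUnit_one_sub_X_pow m).unit ^ k) : PowerSeries ℤ))

/-! ### Auxiliary lemmas -/

/-- Gauss sum for an interval. -/
lemma sum_Icc_id_mul_two' (a b : ℕ) (h : a ≤ b) :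
    (∑ i ∈ Icc a b, i) * 2 = (a + b) * (b + 1 - a) := by
  induction b with
  | zero => interval_cases a <;> simp
  | succ n ih =>
    rcases Nat.lt_or_ge a (n+1) with h'|h'
    · rw [← Finset.Ico_add_one_right_eq_Icc, Finset.sum_Ico_succ_top (by omega), Finset.Ico_add_one_right_eq_Icc, add_mul,
        ih (by omega)]
      cases Nat.exists_eq_add_of_le (by omega : a ≤ n) with
      | intro c hc =>
        subst hc
        have h1 : a + (a + c) = 2*a + c := by omega
        have h2 : a + c + 1 - a = c + 1 := by omega
        have h3 : a + (a + c + 1) = 2*a+c+1 := by omega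
        have h4 : a + c + 1 + 1 - a = c + 2 := by omega
        rw [h1, h2, h3, h4]; ring
    · have : a = n + 1 := by omega
      subst this; simp; omega

/-- Uniqueness of the pentagonal index. -/
lemma pent_index_unique {t u : ℤ} (h : 3*t^2 + t = 3*u^2 + u) : t = u := by
  have h1 : (t - u) * (3*(t + u) + 1) = 0 := by ring_nf; linarith
  rcases mul_eq_zero.1 h1 with h2 | h2
  · linarith
  · omega

lemma units_neg_one_zpow (t : ℤ) : (((-1 : ℤˣ) ^ t : ℤˣ) : ℤ) = (-1:ℤ)^t.natAbs := by
  obtain ⟨m, rfl | rfl⟩ := t.eq_nat_or_neg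
  · rw [zpow_natCast]
    simp [Units.val_pow_eq_pow_val]
  · rw [zpow_neg, zpow_natCast, ← inv_pow, show ((-1:ℤˣ)⁻¹) = -1 from rfl]
    simp [Units.val_pow_eq_pow_val]

/-- Expansion of the finite product into a signed subset-sum count. -/
lemma coeff_prod_one_sub {R : Type} [CommRing R] (d M n : ℕ) :
    (coeff n) (∏ m ∈ range M, ((1 : R⟦X⟧) - X^((m+1)*d))) =
      ∑ T ∈ (range M).powerset.filter (fun T => d * (∑ m ∈ T, (m+1)) = n), (-1:R)^T.card := by
  have h1 : ∀ m ∈ range M, ((1 : R⟦X⟧) - X^((m+1)*d)) = (-(X^((m+1)*d))) + 1 := by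
    intro m _; ring
  rw [Finset.prod_congr rfl h1, Finset.prod_add]
  simp only [prod_const_one, mul_one]
  rw [map_sum]
  have h2 : ∀ T ∈ (range M).powerset,
      (coeff n) (∏ m ∈ T, -(X:R⟦X⟧)^((m+1)*d)) =
        if d * (∑ m ∈ T, (m+1)) = n then (-1:R)^T.card else 0 := by
    intro T _
    have : ∏ m ∈ T, -(X:R⟦X⟧)^((m+1)*d) = C ((-1)^T.card) * X ^ (∑ m ∈ T, (m+1)*d) := by
      rw [← prod_pow_eq_pow_sum]
      calc ∏ m ∈ T, -(X:R⟦X⟧)^((m+1)*d)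
          = ∏ m ∈ T, ((-1) * (X:R⟦X⟧)^((m+1)*d)) := by
            refine Finset.prod_congr rfl fun m _ => by ring
        _ = (∏ _m ∈ T, (-1 : R⟦X⟧)) * ∏ m ∈ T, (X:R⟦X⟧)^((m+1)*d) := Finset.prod_mul_distrib
        _ = _ := by simp [prod_const]
    rw [this, coeff_C_mul, coeff_X_pow]
    rw [← Finset.sum_mul]
    by_cases h : d * (∑ m ∈ T, (m+1)) = n <;> simp [mul_comm, h]
    · omega
  rw [Finset.sum_congr rfl h2, Finset.sum_filter]

/-- Reindexing subsets of `range (n+1)` with weight `m+1` by subsets of `Icc 1 (n+1)`. -/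
lemma reindex_sum (d n : ℕ) :
    (∑ T ∈ (range (n+1)).powerset.filter (fun T => d * (∑ m ∈ T, (m+1)) = n), ((-1:ℤ))^T.card)
      = ∑ S ∈ (Icc 1 (n+1)).powerset.filter (fun S => d * S.sum id = n), (-1:ℤ)^S.card := by
  refine Finset.sum_nbij' (fun T => T.image (· + 1)) (fun S => S.image (· - 1)) ?_ ?_ ?_ ?_ ?_
  · intro T hT
    simp only [mem_filter, mem_powerset] at hT ⊢
    constructor
    · intro x hx
      simp only [mem_image] at hx
      obtain ⟨m, hm, rfl⟩ := hx
      have := hT.1 hm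
      simp only [mem_range] at this
      simp only [mem_Icc]; omega
    · rw [Finset.sum_image (by intro x _ y _ h; simp only at h; omega)]
      simpa using hT.2
  · intro S hS
    simp only [mem_filter, mem_powerset] at hS ⊢
    have hpos : ∀ x ∈ S, 1 ≤ x ∧ x ≤ n + 1 := by
      intro x hx; have := hS.1 hx; simpa only [mem_Icc] using this
    constructor
    · intro x hx
      simp only [mem_image] at hx
      obtain ⟨m, hm, rfl⟩ := hx
      have := hpos m hm
      simp only [mem_range]; omega
    · rw [Finset.sum_image (by intro x hx y hy h; have := hpos x hx; have := hpos y hy; simp only at h; omega)]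
      rw [← hS.2]
      congr 1
      refine Finset.sum_congr rfl fun x hx => ?_
      have := hpos x hx; simp only [id]; omega
  · intro T hT
    show Finset.image (fun x => x - 1) (Finset.image (fun x => x + 1) T) = T
    rw [Finset.image_image]
    have h : ((fun x => x - 1) ∘ fun x : ℕ => x + 1) = id := by funext x; simp
    rw [h, Finset.image_id]
  · intro S hS
    simp only [mem_filter, mem_powerset] at hS
    have hpos : ∀ x ∈ S, 1 ≤ x := by
      intro x hx; have := hS.1 hx; simp only [mem_Icc] at this; omega
    show Finset.image (fun x => x + 1) (Finset.image (fun x => x - 1) S) = S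
    rw [Finset.image_image]
    have h : ∀ x ∈ S, ((fun x => x + 1) ∘ fun x : ℕ => x - 1) x = id x := by
      intro x hx; have := hpos x hx; simp only [Function.comp_apply, id]; omega
    rw [Finset.image_congr h, Finset.image_id]
  · intro T hT
    rw [Finset.card_image_of_injective _ (fun x y h => by omega)]




/-- existence of a gap below the max -/
lemma gapEx (S : Finset ℕ) (h0 : 0 ∉ S) (hne : S.Nonempty) : ∃ j, S.max' hne - j ∉ S :=
  ⟨S.max' hne, by simpa using h0⟩

/-- length of the maximal run of consecutive elements at the top -/
noncomputable def gp (S : Finset ℕ) (h0 : 0 ∉ S) (hne : S.Nonempty) : ℕ :=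
  Nat.find (gapEx S h0 hne)

lemma gp_notMem (S : Finset ℕ) (h0 : 0 ∉ S) (hne : S.Nonempty) :
    S.max' hne - gp S h0 hne ∉ S := Nat.find_spec (gapEx S h0 hne)

lemma gp_mem (S : Finset ℕ) (h0 : 0 ∉ S) (hne : S.Nonempty) {i : ℕ} (hi : i < gp S h0 hne) :
    S.max' hne - i ∈ S := by
  have := Nat.find_min (gapEx S h0 hne) hi
  simpa using this

lemma gp_pos (S : Finset ℕ) (h0 : 0 ∉ S) (hne : S.Nonempty) : 0 < gp S h0 hne := by
  rcases Nat.eq_zero_or_pos (gp S h0 hne) with h | h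
  · exfalso
    have := gp_notMem S h0 hne
    rw [h] at this
    exact this (by simpa using S.max'_mem hne)
  · exact h

lemma gp_le (S : Finset ℕ) (h0 : 0 ∉ S) (hne : S.Nonempty) : gp S h0 hne ≤ S.max' hne :=
  Nat.find_min' _ (by simpa using h0)

lemma mem_pos (S : Finset ℕ) (h0 : 0 ∉ S) {x : ℕ} (hx : x ∈ S) : 1 ≤ x := by
  rcases Nat.eq_zero_or_pos x with h | h
  · exact absurd (h ▸ hx) h0
  · exact h

/-- the top run: everything in `(M - gp, M]` is in `S`. -/
lemma run_subset (S : Finset ℕ) (h0 : 0 ∉ S) (hne : S.Nonempty) {x : ℕ}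
    (h1 : S.max' hne - gp S h0 hne < x) (h2 : x ≤ S.max' hne) : x ∈ S := by
  have h3 : S.max' hne - x < gp S h0 hne := by
    have := gp_le S h0 hne
    omega
  have := gp_mem S h0 hne h3
  have hx : S.max' hne - (S.max' hne - x) = x := by omega
  rwa [hx] at this

/-- the failure condition of Franklin's involution -/
def Bad (S : Finset ℕ) (h0 : 0 ∉ S) (hne : S.Nonempty) : Prop :=
  (S.min' hne ≤ gp S h0 hne ∧ S.min' hne = S.max' hne - S.min' hne + 1)
  ∨ (gp S h0 hne < S.min' hne ∧ S.max' hne = 2 * gp S h0 hne)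

/-- Franklin's involution -/
noncomputable def frk (S : Finset ℕ) (h0 : 0 ∉ S) (hne : S.Nonempty) : Finset ℕ :=
  if S.min' hne ≤ gp S h0 hne then
    insert (S.max' hne + 1) ((S.erase (S.min' hne)).erase (S.max' hne - S.min' hne + 1))
  else
    insert (S.max' hne - gp S h0 hne) (insert (gp S h0 hne) (S.erase (S.max' hne)))

lemma badA_interval (S : Finset ℕ) (h0 : 0 ∉ S) (hne : S.Nonempty)
    (h1 : S.min' hne ≤ gp S h0 hne) (h2 : S.min' hne = S.max' hne - S.min' hne + 1) :
    S = Icc (S.min' hne) (2 * S.min' hne - 1) ∧ S.max' hne = 2 * S.min' hne - 1 := by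
  set m := S.min' hne with hm
  set M := S.max' hne with hM
  have hmM : m ≤ M := S.min'_le _ (S.max'_mem hne)
  have hm1 : 1 ≤ m := mem_pos S h0 (S.min'_mem hne)
  have hM2 : M = 2*m - 1 := by omega
  refine ⟨?_, hM2⟩
  apply Finset.Subset.antisymm
  · intro x hx
    simp only [mem_Icc]
    exact ⟨S.min'_le _ hx, by have := S.le_max' _ hx; omega⟩
  · intro x hx
    simp only [mem_Icc] at hx
    refine run_subset S h0 hne ?_ (by omega)
    have := gp_le S h0 hne
    omega

lemma badB_interval (S : Finset ℕ) (h0 : 0 ∉ S) (hne : S.Nonempty)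
    (h1 : gp S h0 hne < S.min' hne) (h2 : S.max' hne = 2 * gp S h0 hne) :
    S = Icc (gp S h0 hne + 1) (2 * gp S h0 hne) := by
  set m := S.min' hne with hm
  set M := S.max' hne with hM
  set r := gp S h0 hne with hr
  apply Finset.Subset.antisymm
  · intro x hx
    simp only [mem_Icc]
    exact ⟨by have := S.min'_le _ hx; omega, by have := S.le_max' _ hx; omega⟩
  · intro x hx
    simp only [mem_Icc] at hx
    exact run_subset S h0 hne (by omega) (by omega)



lemma frkA_spec (S : Finset ℕ) (h0 : 0 ∉ S) (hne : S.Nonempty)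
    (hA : S.min' hne ≤ gp S h0 hne) (hbad : S.min' hne ≠ S.max' hne - S.min' hne + 1) :
    ∃ (h0' : 0 ∉ frk S h0 hne) (hne' : (frk S h0 hne).Nonempty),
      (frk S h0 hne).sum id = S.sum id ∧
      ((-1:ℤ)^(frk S h0 hne).card = -(-1)^S.card) ∧
      ¬ Bad (frk S h0 hne) h0' hne' ∧
      frk (frk S h0 hne) h0' hne' = S := by
  set m := S.min' hne with hm
  set M := S.max' hne with hM
  set r := gp S h0 hne with hr
  have hm_mem : m ∈ S := S.min'_mem hne
  have hM_mem : M ∈ S := S.max'_mem hne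
  have hm1 : 1 ≤ m := mem_pos S h0 hm_mem
  have hmM : m ≤ M := S.min'_le _ hM_mem
  have hr1 : 1 ≤ r := gp_pos S h0 hne
  have hrM : r ≤ M := gp_le S h0 hne
  have htop : M - m + 1 ∈ S := by
    have h1 : m - 1 < r := by omega
    have := gp_mem S h0 hne h1
    have h2 : M - (m-1) = M - m + 1 := by omega
    rwa [h2] at this
  have hlt : m < M - m + 1 := lt_of_le_of_ne (S.min'_le _ htop) hbad
  have h2m : 2*m ≤ M := by omega
  have hM1 : M + 1 ∉ S := fun h => by have := S.le_max' _ h; omega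
  -- the new set
  set E : Finset ℕ := (S.erase m).erase (M - m + 1) with hE
  have hET : frk S h0 hne = insert (M+1) E := by
    rw [frk, if_pos hA]
  have hE_sub : E ⊆ S := Finset.Subset.trans (Finset.erase_subset _ _) (Finset.erase_subset _ _)
  have hM1E : M + 1 ∉ E := fun h => hM1 (hE_sub h)
  have htop_e : M - m + 1 ∈ S.erase m := Finset.mem_erase.2 ⟨by omega, htop⟩
  have hE_lb : ∀ x ∈ E, m + 1 ≤ x ∧ x ≤ M ∧ x ≠ M - m + 1 := by
    intro x hx
    rw [hE] at hx
    rw [Finset.mem_erase, Finset.mem_erase] at hx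
    obtain ⟨hx1, hx2, hx3⟩ := hx
    exact ⟨by have := S.min'_le _ hx3; omega, S.le_max' _ hx3, hx1⟩
  have h0' : (0:ℕ) ∉ frk S h0 hne := by
    rw [hET, Finset.mem_insert]
    rintro (h | h)
    · omega
    · exact h0 (hE_sub h)
  have hne' : (frk S h0 hne).Nonempty := by rw [hET]; exact Finset.insert_nonempty _ _
  refine ⟨h0', hne', ?_, ?_, ?_, ?_⟩
  · -- sum
    have hs1 : S.sum id = m + (S.erase m).sum id := (Finset.add_sum_erase _ _ hm_mem).symm
    have hs2 : (S.erase m).sum id = (M - m + 1) + E.sum id :=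
      (Finset.add_sum_erase _ _ htop_e).symm
    have hs3 : (frk S h0 hne).sum id = (M+1) + E.sum id := by
      rw [hET, Finset.sum_insert hM1E]; rfl
    omega
  · -- sign
    have hc1 : E.card = S.card - 2 := by
      rw [hE, Finset.card_erase_of_mem htop_e, Finset.card_erase_of_mem hm_mem]; omega
    have hc2 : 2 ≤ S.card := Finset.one_lt_card.2 ⟨m, hm_mem, M - m + 1, htop, by omega⟩
    have hc3 : (frk S h0 hne).card = S.card - 1 := by
      rw [hET, Finset.card_insert_of_notMem hM1E, hc1]; omega
    obtain ⟨c, hcS⟩ : ∃ c, S.card = c + 1 := ⟨S.card - 1, by omega⟩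
    rw [hc3, hcS]
    have hx : c + 1 - 1 = c := rfl
    rw [hx, pow_succ]
    ring
  all_goals {
    -- compute parameters of T
    have hmaxT : (frk S h0 hne).max' hne' = M + 1 := by
      apply le_antisymm
      · apply Finset.max'_le
        intro x hx
        rw [hET, Finset.mem_insert] at hx
        rcases hx with rfl | hx
        · omega
        · have := hE_lb x hx; omega
      · exact Finset.le_max' _ _ (by rw [hET]; exact Finset.mem_insert_self _ _)
    have hminT : m < (frk S h0 hne).min' hne' := by
      have h1 : (frk S h0 hne).min' hne' ∈ insert (M+1) E := by
        rw [← hET]; exact Finset.min'_mem _ _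
      rw [Finset.mem_insert] at h1
      rcases h1 with h1 | h1
      · omega
      · have := hE_lb _ h1; omega
    have hgpT : gp (frk S h0 hne) h0' hne' = m := by
      rw [gp, Nat.find_eq_iff]
      constructor
      · rw [hmaxT]
        have hx : M + 1 - m = M - m + 1 := by omega
        rw [hx, hET, Finset.mem_insert]
        rintro (h | h)
        · omega
        · exact (hE_lb _ h).2.2 rfl
      · intro j hj hnot
        apply hnot
        rw [hmaxT, hET, Finset.mem_insert]
        rcases Nat.eq_zero_or_pos j with rfl | hj1
        · left; omega
        · right
          have h1 : j - 1 < r := by omega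
          have h2 := gp_mem S h0 hne h1
          have h3 : M - (j - 1) = M + 1 - j := by omega
          rw [h3] at h2
          have h4 : M + 1 - j ≠ m := by omega
          have h5 : M + 1 - j ≠ M - m + 1 := by omega
          rw [hE, Finset.mem_erase, Finset.mem_erase]
          exact ⟨h5, h4, h2⟩
    have hbadT : ¬ Bad (frk S h0 hne) h0' hne' := by
      rw [Bad, hgpT, hmaxT]
      rintro (⟨h1, _⟩ | ⟨_, h2⟩)
      · omega
      · omega
    first
    | exact hbadT
    | { -- frk (frk S) = S
        rw [frk, if_neg (by rw [hgpT]; omega)]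
        rw [hgpT, hmaxT]
        have h1 : (frk S h0 hne).erase (M + 1) = E := by rw [hET]; exact Finset.erase_insert hM1E
        rw [h1]
        have h2 : M + 1 - m = M - m + 1 := by omega
        rw [h2, Finset.insert_comm, Finset.insert_erase htop_e, Finset.insert_erase hm_mem] }
  }

lemma frkB_spec (S : Finset ℕ) (h0 : 0 ∉ S) (hne : S.Nonempty)
    (hB : gp S h0 hne < S.min' hne) (hbad : S.max' hne ≠ 2 * gp S h0 hne) :
    ∃ (h0' : 0 ∉ frk S h0 hne) (hne' : (frk S h0 hne).Nonempty),
      (frk S h0 hne).sum id = S.sum id ∧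
      ((-1:ℤ)^(frk S h0 hne).card = -(-1)^S.card) ∧
      ¬ Bad (frk S h0 hne) h0' hne' ∧
      frk (frk S h0 hne) h0' hne' = S := by
  set m := S.min' hne with hm
  set M := S.max' hne with hM
  set r := gp S h0 hne with hr
  have hm_mem : m ∈ S := S.min'_mem hne
  have hM_mem : M ∈ S := S.max'_mem hne
  have hm1 : 1 ≤ m := mem_pos S h0 hm_mem
  have hmM : m ≤ M := S.min'_le _ hM_mem
  have hr1 : 1 ≤ r := gp_pos S h0 hne
  have hrM : r ≤ M := gp_le S h0 hne
  have hrun1 : M - r + 1 ∈ S := by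
    have h1 : r - 1 < r := by omega
    have := gp_mem S h0 hne h1
    have h2 : M - (r-1) = M - r + 1 := by omega
    rwa [h2] at this
  have hge : 2 * r < M := by
    have := S.min'_le _ hrun1
    omega
  have hMr_not : M - r ∉ S := gp_notMem S h0 hne
  have hr_not : r ∉ S := fun h => absurd (S.min'_le _ h) (by omega)
  set E : Finset ℕ := S.erase M with hE
  have hET : frk S h0 hne = insert (M - r) (insert r E) := by
    rw [frk, if_neg (by omega)]
  have hE_sub : E ⊆ S := Finset.erase_subset _ _
  have hE_lb : ∀ x ∈ E, m ≤ x ∧ x ≤ M - 1 := by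
    intro x hx
    rw [hE, Finset.mem_erase] at hx
    exact ⟨S.min'_le _ hx.2, by have := S.le_max' _ hx.2; omega⟩
  have hrE : r ∉ insert r E → False := fun h => h (Finset.mem_insert_self _ _)
  have hrE' : r ∉ E := fun h => hr_not (hE_sub h)
  have hMrE : M - r ∉ insert r E := by
    rw [Finset.mem_insert]
    rintro (h | h)
    · omega
    · exact hMr_not (hE_sub h)
  have h0' : (0:ℕ) ∉ frk S h0 hne := by
    rw [hET, Finset.mem_insert, Finset.mem_insert]
    rintro (h | h | h)
    · omega
    · omega
    · exact h0 (hE_sub h)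
  have hne' : (frk S h0 hne).Nonempty := by rw [hET]; exact Finset.insert_nonempty _ _
  refine ⟨h0', hne', ?_, ?_, ?_, ?_⟩
  · -- sum
    have hs1 : S.sum id = M + E.sum id := (Finset.add_sum_erase _ _ hM_mem).symm
    have hs2 : (frk S h0 hne).sum id = (M - r) + (r + E.sum id) := by
      rw [hET, Finset.sum_insert hMrE, Finset.sum_insert hrE']; rfl
    omega
  · -- sign
    have hc1 : E.card = S.card - 1 := by rw [hE, Finset.card_erase_of_mem hM_mem]
    have hc2 : 1 ≤ S.card := Finset.card_pos.2 hne
    have hc3 : (frk S h0 hne).card = S.card + 1 := by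
      rw [hET, Finset.card_insert_of_notMem hMrE, Finset.card_insert_of_notMem hrE', hc1]
      omega
    rw [hc3, pow_succ]
    ring
  all_goals {
    have hmaxT : (frk S h0 hne).max' hne' = M - 1 := by
      apply le_antisymm
      · apply Finset.max'_le
        intro x hx
        rw [hET, Finset.mem_insert, Finset.mem_insert] at hx
        rcases hx with rfl | rfl | hx
        · omega
        · omega
        · exact (hE_lb x hx).2
      · apply Finset.le_max'
        rw [hET, Finset.mem_insert, Finset.mem_insert]
        rcases Nat.eq_or_lt_of_le hr1 with h1 | h1
        · left; omega
        · right; right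
          rw [hE, Finset.mem_erase]
          have h2 := gp_mem S h0 hne (show 1 < r by omega)
          exact ⟨by omega, h2⟩
    have hminT : (frk S h0 hne).min' hne' = r := by
      apply le_antisymm
      · apply Finset.min'_le
        rw [hET, Finset.mem_insert, Finset.mem_insert]
        right; left; rfl
      · apply Finset.le_min'
        intro x hx
        rw [hET, Finset.mem_insert, Finset.mem_insert] at hx
        rcases hx with rfl | rfl | hx
        · omega
        · omega
        · have := hE_lb x hx; omega
    have hgeT : r ≤ gp (frk S h0 hne) h0' hne' := by
      rw [gp, Nat.le_find_iff]
      intro j hj hnot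
      apply hnot
      rw [hmaxT, hET, Finset.mem_insert, Finset.mem_insert]
      rcases Nat.lt_or_ge j (r-1) with h1 | h1
      · right; right
        have h2 := gp_mem S h0 hne (show j + 1 < r by omega)
        have h3 : M - (j+1) = M - 1 - j := by omega
        rw [h3] at h2
        rw [hE, Finset.mem_erase]
        exact ⟨by omega, h2⟩
      · left; omega
    have hbadT : ¬ Bad (frk S h0 hne) h0' hne' := by
      rw [Bad, hmaxT, hminT]
      rintro (⟨_, h1⟩ | ⟨h1, _⟩)
      · omega
      · omega
    first
    | exact hbadT
    | { rw [frk, if_pos (by rw [hminT]; exact hgeT)]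
        rw [hmaxT, hminT]
        have h2 : M - 1 + 1 = M := by omega
        have h3 : M - 1 - r + 1 = M - r := by omega
        rw [h2, h3]
        have hrMrE : r ∉ insert (M - r) E := by
          rw [Finset.mem_insert]
          rintro (h | h)
          · omega
          · exact hrE' h
        have hMrE'' : M - r ∉ E := fun h => hMr_not (hE_sub h)
        have h4 : (frk S h0 hne).erase r = insert (M - r) E := by
          rw [hET, Finset.insert_comm, Finset.erase_insert hrMrE]
        rw [h4, Finset.erase_insert hMrE'', hE, Finset.insert_erase hM_mem] }
  }

/-- proof-independent failure predicate -/
def Bad' (S : Finset ℕ) : Prop := ∃ (h0 : 0 ∉ S) (hne : S.Nonempty), Bad S h0 hne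

lemma frk_spec (S : Finset ℕ) (h0 : 0 ∉ S) (hne : S.Nonempty) (hgood : ¬ Bad' S) :
    (0 ∉ frk S h0 hne) ∧ (frk S h0 hne).Nonempty ∧
      (frk S h0 hne).sum id = S.sum id ∧
      ((-1:ℤ)^(frk S h0 hne).card = -(-1)^S.card) ∧
      ¬ Bad' (frk S h0 hne) ∧
      ∀ (h0'' : 0 ∉ frk S h0 hne) (hne'' : (frk S h0 hne).Nonempty),
        frk (frk S h0 hne) h0'' hne'' = S := by
  rcases le_or_gt (S.min' hne) (gp S h0 hne) with hA | hB
  · have hbad : S.min' hne ≠ S.max' hne - S.min' hne + 1 :=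
      fun h => hgood ⟨h0, hne, Or.inl ⟨hA, h⟩⟩
    obtain ⟨h0', hne', h1, h2, h3, h4⟩ := frkA_spec S h0 hne hA hbad
    exact ⟨h0', hne', h1, h2, fun ⟨p, q, hb⟩ => h3 hb, fun p q => h4⟩
  · have hbad : S.max' hne ≠ 2 * gp S h0 hne :=
      fun h => hgood ⟨h0, hne, Or.inr ⟨hB, h⟩⟩
    obtain ⟨h0', hne', h1, h2, h3, h4⟩ := frkB_spec S h0 hne hB hbad
    exact ⟨h0', hne', h1, h2, fun ⟨p, q, hb⟩ => h3 hb, fun p q => h4⟩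

/-- Gauss sum for an interval (duplicated from main file). -/
lemma sum_Icc_id_mul_two'' (a b : ℕ) (h : a ≤ b) :
    (∑ i ∈ Icc a b, i) * 2 = (a + b) * (b + 1 - a) := by
  induction b with
  | zero => interval_cases a <;> simp
  | succ n ih =>
    rcases Nat.lt_or_ge a (n+1) with h'|h'
    · rw [← Finset.Ico_add_one_right_eq_Icc, Finset.sum_Ico_succ_top (by omega), Finset.Ico_add_one_right_eq_Icc, add_mul,
        ih (by omega)]
      cases Nat.exists_eq_add_of_le (by omega : a ≤ n) with
      | intro c hc =>
        subst hc
        have h1 : a + (a + c) = 2*a + c := by omega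
        have h2 : a + c + 1 - a = c + 1 := by omega
        have h3 : a + (a + c + 1) = 2*a+c+1 := by omega
        have h4 : a + c + 1 + 1 - a = c + 2 := by omega
        rw [h1, h2, h3, h4]; ring
    · have : a = n + 1 := by omega
      subst this; simp; omega

lemma Icc_facts (a b : ℕ) (h1 : 1 ≤ a) (hab : a ≤ b) :
    ∃ (h0 : 0 ∉ Icc a b) (hne : (Icc a b).Nonempty),
      (Icc a b).min' hne = a ∧ (Icc a b).max' hne = b ∧
        gp (Icc a b) h0 hne = b + 1 - a := by
  have h0 : 0 ∉ Icc a b := by simp only [mem_Icc]; omega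
  have hne : (Icc a b).Nonempty := ⟨a, by simp only [mem_Icc]; omega⟩
  have hmax : (Icc a b).max' hne = b := by
    apply le_antisymm
    · apply Finset.max'_le
      intro x hx
      exact (mem_Icc.1 hx).2
    · exact Finset.le_max' _ _ (by simp only [mem_Icc]; omega)
  have hmin : (Icc a b).min' hne = a := by
    apply le_antisymm
    · exact Finset.min'_le _ _ (by simp only [mem_Icc]; omega)
    · apply Finset.le_min'
      intro x hx
      exact (mem_Icc.1 hx).1
  refine ⟨h0, hne, hmin, hmax, ?_⟩
  rw [gp, Nat.find_eq_iff]
  constructor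
  · rw [hmax, mem_Icc]; omega
  · intro j hj hnot
    apply hnot
    rw [hmax, mem_Icc]; omega

/-- the unique bad (pentagonal) set with pentagonal index `t` -/
def pentaSet (t : ℤ) : Finset ℕ :=
  if 0 ≤ t then Icc (t.natAbs + 1) (2 * t.natAbs) else Icc t.natAbs (2 * t.natAbs - 1)

lemma pentaSet_spec (t : ℤ) (ht : t ≠ 0) :
    0 ∉ pentaSet t ∧ (pentaSet t).Nonempty ∧ Bad' (pentaSet t) ∧
      (((pentaSet t).sum id : ℕ) : ℤ) * 2 = 3 * t^2 + t ∧
      (pentaSet t).card = t.natAbs := by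
  set k := t.natAbs with hk
  have hk1 : 1 ≤ k := by omega
  rcases le_or_gt 0 t with hpos | hneg
  · have hps : pentaSet t = Icc (k + 1) (2 * k) := if_pos hpos
    obtain ⟨h0, hne, hmin, hmax, hgp⟩ := Icc_facts (k+1) (2*k) (by omega) (by omega)
    rw [hps]
    refine ⟨h0, hne, ⟨h0, hne, Or.inr ?_⟩, ?_, ?_⟩
    · rw [hmin, hmax, hgp]
      constructor <;> omega
    · have hg := sum_Icc_id_mul_two'' (k+1) (2*k) (by omega)
      have ht' : t = (k : ℤ) := by omega
      have e1 : k + 1 + 2*k = 3*k+1 := by omega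
      have e2 : 2*k+1-(k+1) = k := by omega
      rw [e1, e2] at hg
      have : (∑ i ∈ Icc (k+1) (2*k), i) * 2 = (3*k+1) * k := hg
      have hcast : ((∑ i ∈ Icc (k+1) (2*k), i : ℕ) : ℤ) * 2 = ((3*k+1) * k : ℕ) := by
        exact_mod_cast congrArg (Nat.cast : ℕ → ℤ) this
      rw [show (Icc (k+1) (2*k)).sum id = ∑ i ∈ Icc (k+1) (2*k), i from rfl]
      rw [hcast, ht']
      push_cast
      ring
    · rw [Nat.card_Icc]; omega
  · have hps : pentaSet t = Icc k (2 * k - 1) := if_neg (by omega)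
    obtain ⟨h0, hne, hmin, hmax, hgp⟩ := Icc_facts k (2*k-1) (by omega) (by omega)
    rw [hps]
    refine ⟨h0, hne, ⟨h0, hne, Or.inl ?_⟩, ?_, ?_⟩
    · rw [hmin, hmax, hgp]
      constructor <;> omega
    · have hg := sum_Icc_id_mul_two'' k (2*k-1) (by omega)
      have ht' : t = -(k : ℤ) := by omega
      have e1 : k + (2*k-1) = 3*k-1 := by omega
      have e2 : 2*k-1+1-k = k := by omega
      rw [e1, e2] at hg
      have : (∑ i ∈ Icc k (2*k-1), i) * 2 = (3*k-1) * k := hg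
      have hcast : ((∑ i ∈ Icc k (2*k-1), i : ℕ) : ℤ) * 2 = (((3*k-1) * k : ℕ) : ℤ) := by
        exact_mod_cast congrArg (Nat.cast : ℕ → ℤ) this
      rw [show (Icc k (2*k-1)).sum id = ∑ i ∈ Icc k (2*k-1), i from rfl]
      rw [hcast, ht']
      push_cast [show (1:ℕ) ≤ 3*k by omega]
      ring
    · rw [Nat.card_Icc]; omega

lemma bad_eq_pentaSet (K : ℕ) (S : Finset ℕ) (h0 : 0 ∉ S) (hne : S.Nonempty)
    (hsum : S.sum id = K) (hbad : Bad S h0 hne) :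
    ∃ u : ℤ, 2*(K:ℤ) = 3*u^2 + u ∧ u ≠ 0 ∧ S = pentaSet u := by
  have hm1 : 1 ≤ S.min' hne := mem_pos S h0 (S.min'_mem hne)
  rcases hbad with ⟨h1, h2⟩ | ⟨h1, h2⟩
  · obtain ⟨hS, hM⟩ := badA_interval S h0 hne h1 h2
    set m := S.min' hne with hm
    refine ⟨-(m:ℤ), ?_, by omega, ?_⟩
    · have hg := sum_Icc_id_mul_two'' m (2*m-1) (by omega)
      rw [← hS] at hg
      have hid : (∑ i ∈ S, i) = K := hsum
      rw [hid] at hg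
      have e1 : m + (2*m-1) = 3*m-1 := by omega
      have e2 : 2*m-1+1-m = m := by omega
      rw [e1, e2] at hg
      have hz := congrArg (Nat.cast (R := ℤ)) hg
      push_cast [show (1:ℕ) ≤ 3*m by omega] at hz
      linear_combination hz
    · rw [pentaSet, if_neg (by omega), hS]
      congr 1 <;> simp [Int.natAbs_neg]
  · obtain hS := badB_interval S h0 hne h1 h2
    set r := gp S h0 hne with hr
    have hr1 : 1 ≤ r := gp_pos S h0 hne
    refine ⟨(r:ℤ), ?_, by omega, ?_⟩
    · have hg := sum_Icc_id_mul_two'' (r+1) (2*r) (by omega)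
      rw [← hS] at hg
      have hid : (∑ i ∈ S, i) = K := hsum
      rw [hid] at hg
      have e1 : r + 1 + 2*r = 3*r+1 := by omega
      have e2 : 2*r+1-(r+1) = r := by omega
      rw [e1, e2] at hg
      have hz := congrArg (Nat.cast (R := ℤ)) hg
      push_cast at hz
      linear_combination hz
    · rw [pentaSet, if_pos (by omega), hS]
      congr 1 <;> simp

lemma mem_A_iff (K L : ℕ) (hL : K ≤ L) (S : Finset ℕ) :
    S ∈ ((Icc 1 L).powerset).filter (fun S => S.sum id = K) ↔ (0 ∉ S ∧ S.sum id = K) := by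
  rw [mem_filter, mem_powerset]
  constructor
  · rintro ⟨hsub, hsum⟩
    refine ⟨fun h => ?_, hsum⟩
    have := hsub h
    simp only [mem_Icc] at this
    omega
  · rintro ⟨h0, hsum⟩
    refine ⟨fun x hx => ?_, hsum⟩
    have h1 : 1 ≤ x := mem_pos S h0 hx
    have h2 : x ≤ S.sum id := Finset.single_le_sum (f := id) (fun i _ => Nat.zero_le i) hx
    simp only [mem_Icc]
    omega

lemma nonempty_of_sum_pos (S : Finset ℕ) (K : ℕ) (hK : 0 < K) (h : S.sum id = K) :
    S.Nonempty := by
  rw [Finset.nonempty_iff_ne_empty]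
  rintro rfl
  simp at h
  omega

lemma pent_index_unique' {t u : ℤ} (h : 3*t^2 + t = 3*u^2 + u) : t = u := by
  have h1 : (t - u) * (3*(t + u) + 1) = 0 := by ring_nf; linarith
  rcases mul_eq_zero.1 h1 with h2 | h2
  · linarith
  · omega

lemma franklin_nonpent' (K L : ℕ) (hK : 0 < K) (hL : K ≤ L)
    (h : ¬ ∃ t : ℤ, 2*(K:ℤ) = 3*t^2 + t) :
    (∑ S ∈ ((Icc 1 L).powerset).filter (fun S => S.sum id = K), (-1:ℤ)^S.card) = 0 := by
  have hmem := mem_A_iff K L hL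
  have h0f : ∀ S, S ∈ ((Icc 1 L).powerset).filter (fun S => S.sum id = K) → 0 ∉ S :=
    fun S hS => ((hmem S).1 hS).1
  have hsf : ∀ S, S ∈ ((Icc 1 L).powerset).filter (fun S => S.sum id = K) → S.sum id = K :=
    fun S hS => ((hmem S).1 hS).2
  have hnef : ∀ S, S ∈ ((Icc 1 L).powerset).filter (fun S => S.sum id = K) → S.Nonempty :=
    fun S hS => nonempty_of_sum_pos S K hK (hsf S hS)
  have hgood : ∀ S, S ∈ ((Icc 1 L).powerset).filter (fun S => S.sum id = K) → ¬ Bad' S := by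
    rintro S hS ⟨p, q, hb⟩
    obtain ⟨u, hu, _, _⟩ := bad_eq_pentaSet K S p q (hsf S hS) hb
    exact h ⟨u, hu⟩
  refine Finset.sum_involution (fun S hS => frk S (h0f S hS) (hnef S hS)) ?_ ?_ ?_ ?_
  · intro S hS
    obtain ⟨_, _, _, hsgn, _, _⟩ := frk_spec S (h0f S hS) (hnef S hS) (hgood S hS)
    rw [hsgn]; ring
  · intro S hS _ heq
    replace heq : frk S (h0f S hS) (hnef S hS) = S := heq
    obtain ⟨_, _, _, hsgn, _, _⟩ := frk_spec S (h0f S hS) (hnef S hS) (hgood S hS)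
    rw [heq] at hsgn
    have h2 : (2:ℤ) * (-1)^S.card = 0 := by linarith
    rcases Nat.even_or_odd S.card with he | ho
    · rw [he.neg_one_pow] at h2; norm_num at h2
    · rw [ho.neg_one_pow] at h2; norm_num at h2
  · intro S hS
    obtain ⟨h0', hne', hsum', _, _, _⟩ := frk_spec S (h0f S hS) (hnef S hS) (hgood S hS)
    exact (hmem _).2 ⟨h0', by rw [hsum']; exact hsf S hS⟩
  · intro S hS
    obtain ⟨h0', hne', _, _, _, hff⟩ := frk_spec S (h0f S hS) (hnef S hS) (hgood S hS)
    exact hff _ _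

lemma franklin_pent' (K L : ℕ) (hK : 0 < K) (hL : K ≤ L) (t : ℤ) (ht : 2*(K:ℤ) = 3*t^2 + t) :
    (∑ S ∈ ((Icc 1 L).powerset).filter (fun S => S.sum id = K), (-1:ℤ)^S.card)
      = (-1:ℤ)^t.natAbs := by
  have ht0 : t ≠ 0 := by rintro rfl; norm_num at ht; omega
  obtain ⟨hp0, hpne, hpbad, hpsum, hpcard⟩ := pentaSet_spec t ht0
  have hmem := mem_A_iff K L hL
  have hS0sum : (pentaSet t).sum id = K := by
    have h1 : (((pentaSet t).sum id : ℕ) : ℤ) * 2 = 2*(K:ℤ) := by rw [hpsum, ht]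
    push_cast at h1
    omega
  have hS0A : pentaSet t ∈ ((Icc 1 L).powerset).filter (fun S => S.sum id = K) :=
    (hmem _).2 ⟨hp0, hS0sum⟩
  rw [← Finset.add_sum_erase _ _ hS0A, hpcard]
  set B := (((Icc 1 L).powerset).filter (fun S => S.sum id = K)).erase (pentaSet t) with hB
  have hrest : (∑ S ∈ B, (-1:ℤ)^S.card) = 0 := by
    have h0f : ∀ S, S ∈ B → 0 ∉ S :=
      fun S hS => ((hmem S).1 (Finset.mem_of_mem_erase hS)).1
    have hsf : ∀ S, S ∈ B → S.sum id = K :=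
      fun S hS => ((hmem S).1 (Finset.mem_of_mem_erase hS)).2
    have hnef : ∀ S, S ∈ B → S.Nonempty :=
      fun S hS => nonempty_of_sum_pos S K hK (hsf S hS)
    have hgood : ∀ S, S ∈ B → ¬ Bad' S := by
      rintro S hS ⟨p, q, hb⟩
      obtain ⟨u, hu, _, hSu⟩ := bad_eq_pentaSet K S p q (hsf S hS) hb
      have : t = u := pent_index_unique' (by linarith)
      exact (Finset.ne_of_mem_erase hS) (by rw [hSu, this])
    refine Finset.sum_involution (fun S hS => frk S (h0f S hS) (hnef S hS)) ?_ ?_ ?_ ?_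
    · intro S hS
      obtain ⟨_, _, _, hsgn, _, _⟩ := frk_spec S (h0f S hS) (hnef S hS) (hgood S hS)
      rw [hsgn]; ring
    · intro S hS _ heq
      replace heq : frk S (h0f S hS) (hnef S hS) = S := heq
      obtain ⟨_, _, _, hsgn, _, _⟩ := frk_spec S (h0f S hS) (hnef S hS) (hgood S hS)
      rw [heq] at hsgn
      have h2 : (2:ℤ) * (-1)^S.card = 0 := by linarith
      rcases Nat.even_or_odd S.card with he | ho
      · rw [he.neg_one_pow] at h2; norm_num at h2
      · rw [ho.neg_one_pow] at h2; norm_num at h2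
    · intro S hS
      obtain ⟨h0', hne', hsum', _, hgood', _⟩ := frk_spec S (h0f S hS) (hnef S hS) (hgood S hS)
      show frk S (h0f S hS) (hnef S hS) ∈ B
      rw [hB, Finset.mem_erase]
      refine ⟨?_, (hmem _).2 ⟨h0', by rw [hsum']; exact hsf S hS⟩⟩
      intro heq
      exact hgood' (heq ▸ hpbad)
    · intro S hS
      obtain ⟨h0', hne', _, _, _, hff⟩ := frk_spec S (h0f S hS) (hnef S hS) (hgood S hS)
      exact hff _ _
  rw [hrest, add_zero]

/-- Franklin's pentagonal counting: pentagonal case. -/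
lemma franklin_pent (K L : ℕ) (hK : 0 < K) (hL : K ≤ L) (t : ℤ) (ht : 2*(K:ℤ) = 3*t^2 + t) :
    (∑ S ∈ ((Icc 1 L).powerset).filter (fun S => S.sum id = K), (-1:ℤ)^S.card)
      = (-1:ℤ)^t.natAbs :=
  franklin_pent' K L hK hL t ht

/-- Franklin's pentagonal counting: non-pentagonal case. -/
lemma franklin_nonpent (K L : ℕ) (hK : 0 < K) (hL : K ≤ L)
    (h : ¬ ∃ t : ℤ, 2*(K:ℤ) = 3*t^2 + t) :
    (∑ S ∈ ((Icc 1 L).powerset).filter (fun S => S.sum id = K), (-1:ℤ)^S.card) = 0 :=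
  franklin_nonpent' K L hK hL h

/-- The coefficient computation modulo `p`. -/
lemma tau_eq_coeff (p : ℕ) (s : ℕ) (n : ℕ) :
    tau ((p : ℤ) ^ s) (n + 1) =
      coeff n (∏ m ∈ range (n+1), ((1:ℤ⟦X⟧) - X^(m+1))^(p^s)) := by
  unfold tau
  simp only [Nat.add_sub_cancel]
  congr 1
  have h : ∀ m, (isUnit_one_sub_X_pow m).unit ^ ((p:ℤ)^s)
      = (isUnit_one_sub_X_pow m).unit ^ (p^s : ℕ) := by
    intro m
    rw [show ((p:ℤ)^s) = ((p^s : ℕ) : ℤ) by push_cast; ring, zpow_natCast]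
  rw [Finset.prod_congr rfl (fun m _ => h m), ← Units.coeHom_apply, map_prod]
  refine Finset.prod_congr rfl fun m _ => ?_
  rw [map_pow, Units.coeHom_apply, IsUnit.unit_spec]

/-- For a prime `p` and `s ≥ 1`: if `n = p^s·(3t²+t)/2` for some integer `t`, then
`τ_{p^s}(n+1) ≡ (-1)^t (mod p)` (the `t` with a given pentagonal value being unique);
otherwise `τ_{p^s}(n+1) ≡ 0 (mod p)`. -/
theorem tau_prime_pow_modEq (p : ℕ) (hp : p.Prime) (s : ℕ) (hs : 0 < s) (n : ℕ) (hn : 0 < n) :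
    (∀ t : ℤ, 2 * (n : ℤ) = (p : ℤ) ^ s * (3 * t ^ 2 + t) →
      tau ((p : ℤ) ^ s) (n + 1) ≡ (((-1 : ℤˣ) ^ t : ℤˣ) : ℤ) [ZMOD (p : ℤ)]) ∧
    ((¬ ∃ t : ℤ, 2 * (n : ℤ) = (p : ℤ) ^ s * (3 * t ^ 2 + t)) →
      tau ((p : ℤ) ^ s) (n + 1) ≡ 0 [ZMOD (p : ℤ)]) := by
  haveI : Fact p.Prime := ⟨hp⟩
  haveI : CharP ((ZMod p)⟦X⟧) p := by
    refine charP_of_injective_ringHom (f := (C : ZMod p →+* (ZMod p)⟦X⟧)) ?_ p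
    intro a b hab
    simpa using congrArg (constantCoeff (R := ZMod p)) hab
  set d : ℕ := p ^ s with hd
  have hd1 : 0 < d := pow_pos hp.pos s
  -- the key congruence:
  have key : (tau ((p : ℤ) ^ s) (n + 1) : ZMod p) =
      ((∑ S ∈ ((Icc 1 (n+1)).powerset).filter (fun S => d * S.sum id = n), (-1:ℤ)^S.card : ℤ) :
        ZMod p) := by
    rw [tau_eq_coeff]
    have hmap : ((coeff n (∏ m ∈ range (n+1), ((1:ℤ⟦X⟧) - X^(m+1))^(p^s)) : ℤ) : ZMod p)
        = coeff n (∏ m ∈ range (n+1), ((1:(ZMod p)⟦X⟧) - X^((m+1)*d))) := by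
      rw [show ((coeff n (∏ m ∈ range (n+1), ((1:ℤ⟦X⟧) - X^(m+1))^(p^s)) : ℤ) : ZMod p)
          = (Int.castRingHom (ZMod p))
              (coeff n (∏ m ∈ range (n+1), ((1:ℤ⟦X⟧) - X^(m+1))^(p^s))) from rfl,
        ← coeff_map]
      congr 1
      rw [map_prod]
      refine Finset.prod_congr rfl fun m _ => ?_
      rw [map_pow, map_sub, map_one, map_pow, PowerSeries.map_X]
      rw [sub_pow_char_pow (p := p), one_pow, ← pow_mul]
    rw [hmap, coeff_prod_one_sub, ← reindex_sum]
    push_cast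
    rfl
  constructor
  · intro t ht
    -- n = d * K with 2K = 3t^2+t
    have heven : (2:ℤ) ∣ 3*t^2 + t := by
      rcases Int.even_or_odd t with he | ho
      · obtain ⟨c, rfl⟩ := he; exact ⟨6*c^2 + c, by ring⟩
      · obtain ⟨c, rfl⟩ := ho; exact ⟨6*c^2 + 7*c + 2, by ring⟩
    obtain ⟨Kz, hKz⟩ := heven
    have hKznn : 0 ≤ Kz := by nlinarith [sq_nonneg (t : ℤ), sq_nonneg (6*t+1)]
    obtain ⟨K, rfl⟩ := Int.eq_ofNat_of_zero_le hKznn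
    have hnK : (n : ℤ) = (d:ℤ) * K := by
      have : 2*(n:ℤ) = (d:ℤ) * (2*K) := by rw [ht, hKz]; push_cast [hd]; ring
      linarith
    have hnK' : n = d * K := by exact_mod_cast hnK
    have hKpos : 0 < K := by
      rcases Nat.eq_zero_or_pos K with h | h
      · subst h; simp at hnK'; omega
      · exact h
    have hfilter : ((Icc 1 (n+1)).powerset).filter (fun S => d * S.sum id = n)
        = ((Icc 1 (n+1)).powerset).filter (fun S => S.sum id = K) := by
      refine Finset.filter_congr fun S _ => ?_
      constructor
      · intro h; rw [hnK'] at h; exact Nat.eq_of_mul_eq_mul_left hd1 h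
      · intro h; rw [h, hnK']
    refine (ZMod.intCast_eq_intCast_iff _ _ p).1 ?_
    rw [key, hfilter,
      franklin_pent K (n+1) hKpos (le_trans (Nat.le_mul_of_pos_left K hd1) (by omega : d*K ≤ n+1)) t (by push_cast at hKz ⊢; linarith),
      units_neg_one_zpow]
  · intro hnex
    refine (ZMod.intCast_eq_intCast_iff _ _ p).1 ?_
    rw [key]
    suffices h0 : (∑ S ∈ ((Icc 1 (n+1)).powerset).filter (fun S => d * S.sum id = n),
        (-1:ℤ)^S.card) = 0 by rw [h0]
    by_cases hdvd : d ∣ n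
    · obtain ⟨K, rfl⟩ := hdvd
      have hKpos : 0 < K := by
        rcases Nat.eq_zero_or_pos K with h | h
        · subst h; simp at hn
        · exact h
      have hfilter : ((Icc 1 (d*K+1)).powerset).filter (fun S => d * S.sum id = d*K)
          = ((Icc 1 (d*K+1)).powerset).filter (fun S => S.sum id = K) := by
        refine Finset.filter_congr fun S _ => ?_
        constructor
        · intro h; exact Nat.eq_of_mul_eq_mul_left hd1 h
        · intro h; rw [h]
      rw [hfilter]
      refine franklin_nonpent K (d*K+1) hKpos (by nlinarith) ?_
      rintro ⟨t, htt⟩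
      refine hnex ⟨t, ?_⟩
      have : ((d:ℤ)) = (p:ℤ)^s := by push_cast [hd]; ring
      push_cast
      rw [← this]
      push_cast at htt
      linear_combination (d:ℤ) * htt
    · have hemp : ((Icc 1 (n+1)).powerset).filter (fun S => d * S.sum id = n) = ∅ := by
        refine Finset.filter_eq_empty_iff.2 ?_
        intro S _ h
        exact hdvd ⟨S.sum id, h.symm⟩
      rw [hemp, Finset.sum_empty]
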